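/- Let P and Q be finite posets, each with at least two points and without isolated points, and let f : P → Q be a surjective order-preserving map. Then there exists an order-preserving map g : P → Q such that g maps the set of minimal points of P onto the set of minimal points of Q, g maps the set of maximal points of P onto the set of maximal points of Q, and g agrees with f on all points of P that are neither minimal nor maximal. -/
import Mathlib


open Set

/-- Minimal points of a poset. -/
def LSet (α : Type*) [PartialOrder α] : Set α := {x | ∀ y, y ≤ x → y = x}

/-- Maximal points of a poset. -/
def USet (α : Type*) [PartialOrder α] : Set α := {x | ∀ y, x ≤ y → y = x}

/-- Extremal points. -/
def ESet (α : Type*) [PartialOrder α] : Set α := LSet α ∪ USet α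

/-- Non-extremal (interior) points. -/
def MSet (α : Type*) [PartialOrder α] : Set α := (ESet α)ᶜ

/-- No isolated points: every point is comparable to some other point. -/
def NoIsolated (α : Type*) [PartialOrder α] : Prop := ∀ x : α, ∃ y : α, x < y ∨ y < x

/-- Height one: every point is extremal and some strict comparability exists. -/
def HeightOne (α : Type*) [PartialOrder α] : Prop :=
  (∀ x : α, x ∈ ESet α) ∧ ∃ x y : α, x < y

/-- A 4-crown with minimal points a, b and maximal points v, w:
the comparabilities are exactly a<v, a<w, b<v, b<w. -/
def IsCrown {α : Type*} [PartialOrder α] (a b v w : α) : Prop :=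
  a < v ∧ a < w ∧ b < v ∧ b < w ∧ ¬ a ≤ b ∧ ¬ b ≤ a ∧ ¬ v ≤ w ∧ ¬ w ≤ v

/-- The inner of a 4-crown: [a,v] ∩ [b,w]. -/
def crownInner {α : Type*} [PartialOrder α] (a b v w : α) : Set α :=
  {m | a ≤ m ∧ m ≤ v} ∩ {m | b ≤ m ∧ m ≤ w}

/-- An improper 4-crown contained in the extremal points E(P). -/
def IsImproperCrownE {α : Type*} [PartialOrder α] (a b v w : α) : Prop :=
  IsCrown a b v w ∧ a ∈ ESet α ∧ b ∈ ESet α ∧ v ∈ ESet α ∧ w ∈ ESet α ∧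
    (crownInner a b v w).Nonempty

/-- Inner points of improper 4-crowns contained in E(P). -/
def innerPts (α : Type*) [PartialOrder α] : Set α :=
  {m | ∃ a b v w : α, IsImproperCrownE a b v w ∧ m ∈ crownInner a b v w}

/-- Ξ(m): union of all improper 4-crowns with inner point m. -/
def Xi {α : Type*} [PartialOrder α] (m : α) : Set α :=
  (LSet α ∩ {x | x ≤ m}) ∪ (USet α ∩ {x | m ≤ x})

/-- 4-crown bundles: maximal sets Ξ(m) with respect to inclusion. -/
def bundles (α : Type*) [PartialOrder α] : Set (Set α) :=
  {F | ∃ m ∈ innerPts α, F = Xi m ∧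
    ∀ m' ∈ innerPts α, Xi m ⊆ Xi m' → Xi m' = Xi m}

/-- R is a retract of the poset on α. -/
def IsRetract (α : Type*) [PartialOrder α] (R : Set α) : Prop :=
  ∃ r : α → α, Monotone r ∧ (∀ x, r (r x) = r x) ∧ Set.range r = R

/-- C is a retract of the induced subposet on Y. -/
def IsRetractIn {α : Type*} [PartialOrder α] (Y C : Set α) : Prop :=
  ∃ r : Y → Y, Monotone r ∧ (∀ x, r (r x) = r x) ∧
    Set.range r = {y : Y | (y : α) ∈ C}

/-- The comparability graph of the poset is connected. -/
def PosetConnected (α : Type*) [PartialOrder α] : Prop :=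
  ∀ x y : α, Relation.ReflTransGen (fun u v => u ≤ v ∨ v ≤ u) x y

/-- Minimal points of an induced subposet. -/
def minIn {α : Type*} [PartialOrder α] (S : Set α) : Set α :=
  {x ∈ S | ∀ y ∈ S, y ≤ x → y = x}

/-- Maximal points of an induced subposet. -/
def maxIn {α : Type*} [PartialOrder α] (S : Set α) : Set α :=
  {x ∈ S | ∀ y ∈ S, x ≤ y → y = x}

/-- In a finite poset, below every point there is a minimal point. -/
lemma exists_LSet_le {β : Type*} [Finite β] [PartialOrder β] (b : β) :
    ∃ c, c ∈ LSet β ∧ c ≤ b := by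
  have : WellFoundedLT β := Finite.to_wellFoundedLT
  induction b using WellFoundedLT.induction with
  | ind b ih =>
    by_cases hb : b ∈ LSet β
    · exact ⟨b, hb, le_refl b⟩
    · simp only [LSet, Set.mem_setOf_eq, not_forall] at hb
      obtain ⟨y, hy, hne⟩ := hb
      obtain ⟨c, hc, hcy⟩ := ih y (lt_of_le_of_ne hy hne)
      exact ⟨c, hc, hcy.trans hy⟩

/-- In a finite poset, above every point there is a maximal point. -/
lemma exists_le_USet {β : Type*} [Finite β] [PartialOrder β] (b : β) :
    ∃ c, c ∈ USet β ∧ b ≤ c := by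
  obtain ⟨c, hc, hcb⟩ := exists_LSet_le (β := βᵒᵈ) (OrderDual.toDual b)
  exact ⟨OrderDual.ofDual c, fun y hy => hc (OrderDual.toDual y) hy, hcb⟩

theorem stmt0 {α β : Type*} [Fintype α] [PartialOrder α] [Fintype β] [PartialOrder β]
    [Nontrivial α] [Nontrivial β]
    (hPiso : NoIsolated α) (hQiso : NoIsolated β)
    (f : α → β) (hf : Monotone f) (hsurj : Function.Surjective f) :
    ∃ g : α → β, Monotone g ∧ g '' LSet α = LSet β ∧ g '' USet α = USet β ∧
      ∀ x ∈ MSet α, g x = f x := by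
  classical
  -- choice of minimal point below / maximal point above
  choose dn hdnL hdnle using fun b : β => exists_LSet_le b
  choose up hupU hupge using fun b : β => exists_le_USet b
  -- if b is minimal, dn b = b; if maximal, up b = b
  have hdn_eq : ∀ b ∈ LSet β, dn b = b := fun b hb => hb _ (hdnle b)
  have hup_eq : ∀ b ∈ USet β, up b = b := fun b hb => hb _ (hupge b)
  -- no point of α is both minimal and maximal
  have hdisj : ∀ x : α, x ∈ LSet α → x ∉ USet α := by
    intro x hL hU
    obtain ⟨y, hy | hy⟩ := hPiso x
    · exact hy.ne (hU y hy.le).symm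
    · exact hy.ne (hL y hy.le)
  set g : α → β := fun x =>
    if x ∈ LSet α then dn (f x) else if x ∈ USet α then up (f x) else f x with hg
  have gL : ∀ x ∈ LSet α, g x = dn (f x) := by intro x hx; simp [hg, hx]
  have gU : ∀ x ∈ USet α, g x = up (f x) := by
    intro x hx; simp [hg, hx, hdisj x]
    intro hL; exact absurd hx (hdisj x hL)
  have gM : ∀ x, x ∉ LSet α → x ∉ USet α → g x = f x := by
    intro x h1 h2; simp [hg, h1, h2]
  -- key bounds
  have gle : ∀ x, x ∉ USet α → g x ≤ f x := by
    intro x hx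
    by_cases hL : x ∈ LSet α
    · rw [gL x hL]; exact hdnle _
    · rw [gM x hL hx]
  have geg : ∀ x, x ∉ LSet α → f x ≤ g x := by
    intro x hx
    by_cases hU : x ∈ USet α
    · rw [gU x hU]; exact hupge _
    · rw [gM x hx hU]
  refine ⟨g, ?_, ?_, ?_, ?_⟩
  · -- monotone
    intro x y hxy
    rcases eq_or_lt_of_le hxy with rfl | hlt
    · exact le_refl _
    · have hxU : x ∉ USet α := fun h => hlt.ne (h y hlt.le).symm
      have hyL : y ∉ LSet α := fun h => hlt.ne' (h x hlt.le).symm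
      exact (gle x hxU).trans ((hf hxy).trans (geg y hyL))
  · -- image of LSet
    apply Set.Subset.antisymm
    · rintro b ⟨x, hx, rfl⟩
      rw [gL x hx]; exact hdnL _
    · intro b hb
      obtain ⟨x, hx⟩ := hsurj b
      obtain ⟨a, haL, hax⟩ := exists_LSet_le x
      have : f a = b := hb _ (hx ▸ hf hax)
      exact ⟨a, haL, by rw [gL a haL, this, hdn_eq b hb]⟩
  · -- image of USet
    apply Set.Subset.antisymm
    · rintro b ⟨x, hx, rfl⟩
      rw [gU x hx]; exact hupU _
    · intro b hb
      obtain ⟨x, hx⟩ := hsurj b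
      obtain ⟨a, haU, hax⟩ := exists_le_USet x
      have : f a = b := hb _ (hx ▸ hf hax)
      exact ⟨a, haU, by rw [gU a haU, this, hup_eq b hb]⟩
  · -- agreement on MSet
    intro x hx
    simp only [MSet, ESet, Set.mem_compl_iff, Set.mem_union, not_or] at hx
    exact gM x hx.1 hx.2
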